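/- Let X be a complete metric space with a coordinatewise ρ-contractive (k+1)-mean ν (0 < ρ < 1, k ≥ 2). Then there exists a unique k-mean μ on X that is a stable reduction of ν, i.e., ν(x_1,...,x_k, μ(x_1,...,x_k)) = μ(x_1,...,x_k) for all x_1,...,x_k ∈ X. If ν is symmetric, so is μ. -/

import Mathlib

/-- A `k`-mean: idempotent on constant tuples. -/
def IsMean {X : Type*} {k : ℕ} (μ : (Fin k → X) → X) : Prop :=
  ∀ x : X, μ (fun _ => x) = x

/-- The barycentric operator: the `i`-th coordinate is the mean of the tuple
with the `i`-th coordinate deleted. -/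
def bary {X : Type*} {k : ℕ} (μ : (Fin k → X) → X) (x : Fin (k+1) → X) : Fin (k+1) → X :=
  fun i => μ (fun j => x (i.succAbove j))

/-- Nonexpansive mean: `d(μ x, μ y) ≤ max_j d(x_j, y_j)`. -/
def Nonexpansive {X : Type*} [MetricSpace X] {k : ℕ} (μ : (Fin k → X) → X) : Prop :=
  ∀ x y : Fin k → X, dist (μ x) (μ y) ≤ ⨆ j, dist (x j) (y j)

/-- Coordinatewise `ρ`-contractive mean. -/
def CoordContractive {X : Type*} [MetricSpace X] {k : ℕ} (ρ : ℝ) (μ : (Fin k → X) → X) : Prop :=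
  ∀ (x y : Fin k → X) (j : Fin k), (∀ i, i ≠ j → x i = y i) →
    dist (μ x) (μ y) ≤ ρ * dist (x j) (y j)

/-- Diameter of a tuple. -/
noncomputable def tupDiam {X : Type*} [MetricSpace X] {k : ℕ} (x : Fin k → X) : ℝ :=
  ⨆ p : Fin k × Fin k, dist (x p.1) (x p.2)

/-- A symmetric mean: invariant under permutations of its arguments. -/
def SymmetricMean {X : Type*} {k : ℕ} (μ : (Fin k → X) → X) : Prop :=
  ∀ (σ : Equiv.Perm (Fin k)) (x : Fin k → X), μ (x ∘ σ) = μ x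

theorem stable_reduction_exists_unique {X : Type*} [MetricSpace X] [CompleteSpace X]
    {k : ℕ} (hk : 2 ≤ k) (ν : (Fin (k+1) → X) → X) {ρ : ℝ} (hρ0 : 0 < ρ) (hρ1 : ρ < 1)
    (hνmean : IsMean ν) (hνcon : CoordContractive ρ ν) :
    ∃ μ : (Fin k → X) → X,
      (IsMean μ ∧ ∀ x : Fin k → X, ν (Fin.snoc x (μ x)) = μ x) ∧
      (∀ μ' : (Fin k → X) → X, (∀ x : Fin k → X, ν (Fin.snoc x (μ' x)) = μ' x) → μ' = μ) ∧
      (SymmetricMean ν → SymmetricMean μ) := by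
  have hlip : ∀ (x : Fin k → X) (s t : X),
      dist (ν (Fin.snoc x s)) (ν (Fin.snoc x t)) ≤ ρ * dist s t := by
    intro x s t
    have h := hνcon (Fin.snoc x s) (Fin.snoc x t) (Fin.last k) ?_
    · simpa using h
    · intro i hi
      obtain ⟨j, rfl⟩ := Fin.exists_castSucc_eq.mpr hi
      simp
  have key : ∀ x : Fin k → X, ∃! t : X, ν (Fin.snoc x t) = t := by
    intro x
    haveI : Nonempty X := ⟨x ⟨0, by omega⟩⟩
    have hcon : ContractingWith ⟨ρ, hρ0.le⟩ (fun t => ν (Fin.snoc x t)) := by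
      constructor
      · exact_mod_cast hρ1
      · exact LipschitzWith.of_dist_le_mul (hlip x)
    refine ⟨hcon.fixedPoint _, hcon.fixedPoint_isFixedPt, ?_⟩
    intro t ht
    have h2 := hcon.fixedPoint_isFixedPt
    have h3 := hlip x t (hcon.fixedPoint _)
    rw [ht, show ν (Fin.snoc x (hcon.fixedPoint _)) = hcon.fixedPoint _ from h2] at h3
    have h4 : dist t (hcon.fixedPoint _) = 0 := by
      nlinarith [dist_nonneg (x := t) (y := hcon.fixedPoint (fun t => ν (Fin.snoc x t)))]
    exact eq_of_dist_eq_zero h4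
  classical
  set μ : (Fin k → X) → X := fun x => (key x).exists.choose with hμdef
  have hfix : ∀ x, ν (Fin.snoc x (μ x)) = μ x := fun x => (key x).exists.choose_spec
  have huniq : ∀ (x : Fin k → X) (t : X), ν (Fin.snoc x t) = t → t = μ x := by
    intro x t ht
    exact (key x).unique ht (hfix x)
  refine ⟨μ, ⟨?_, hfix⟩, ?_, ?_⟩
  · intro a
    have hc : (Fin.snoc (fun _ : Fin k => a) a : Fin (k+1) → X) = fun _ => a := by
      funext i
      refine Fin.lastCases ?_ ?_ i <;> simp
    have : ν (Fin.snoc (fun _ : Fin k => a) a) = a := by rw [hc]; exact hνmean a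
    exact (huniq _ _ this).symm
  · intro μ' hμ'
    funext x
    exact huniq x (μ' x) (hμ' x)
  · intro hsym σ x
    set σ' : Equiv.Perm (Fin (k+1)) :=
      (finSuccEquivLast.trans σ.optionCongr).trans finSuccEquivLast.symm with hσ'
    have hcomp : ∀ t : X, (Fin.snoc x t ∘ σ' : Fin (k+1) → X) = Fin.snoc (x ∘ σ) t := by
      intro t
      funext i
      refine Fin.lastCases ?_ ?_ i
      · simp [hσ']
      · intro j
        simp [hσ']
    have : ν (Fin.snoc (x ∘ σ) (μ x)) = μ x := by
      rw [← hcomp, hsym σ' (Fin.snoc x (μ x)), hfix]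
    exact (huniq _ _ this).symm
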